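/- arXiv:2007.09461 — 3 statements merged into one kernel-verified Lean document; each statement's English description precedes it below -/
import Mathlib

section
/- Let f : 𝔹^X → 𝔹 be a Boolean function implemented by a DNF formula φ = ⋁_i C_i, and let A_φ be the reaction system with reactions (pos(C_i), neg(C_i) ∪ {ι_f}, {f}) for each conjunction C_i. For any truth assignment s : X → 𝔹 with corresponding set W_s = {x ∈ X | s(x) = 1}, one has res_{A_φ}(W_s) = {f} if and only if f(s) = 1, and res_{A_φ}(W_s) = ∅ if and only if f(s) = 0. -/
/-- A reaction over background type `α`: (reactants, inhibitors, products). -/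
abbrev Rxn (α : Type) := Finset α × Finset α × Finset α

variable {α : Type} [DecidableEq α]

/-- A reaction `r = (R, I, P)` is enabled in state `T` iff `R ⊆ T` and `I ∩ T = ∅`. -/
def enab (r : Rxn α) (T : Finset α) : Prop := r.1 ⊆ T ∧ Disjoint r.2.1 T

instance (r : Rxn α) (T : Finset α) : Decidable (enab r T) := by
  unfold enab; infer_instance

/-- `res_r(T)`: the product set if `r` is enabled in `T`, else `∅`. -/
def resr (r : Rxn α) (T : Finset α) : Finset α := if enab r T then r.2.2 else ∅

/-- `res_A(T) = ⋃_{r ∈ A} res_r(T)`. -/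
def resA (A : Finset (Rxn α)) (T : Finset α) : Finset α := A.biUnion (fun r => resr r T)

/-- State sequence of an interactive process starting in `X` with contexts `γ`:
`W₀ = X`, `W_{i+1} = C_{i+1} ∪ res_A(W_i)`. -/
def states (A : Finset (Rxn α)) (X : Finset α) (γ : ℕ → Finset α) : ℕ → Finset α
  | 0 => X
  | n + 1 => γ (n + 1) ∪ resA A (states A X γ n)

/-- the reaction system `A_φ = {(pos(Cᵢ), neg(Cᵢ) ∪ {ι_f}, {f}) | Cᵢ ∈ φ}`
simulates the Boolean function `F` implemented by the DNF `φ`: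
`res_{A_φ}(W_s) = {f}` iff `F s = 1`, and `res_{A_φ}(W_s) = ∅` iff `F s = 0`. -/
theorem stmt5 (X : Finset α) (f ι : α) (hf : f ∉ X) (hι : ι ∉ X) (hιf : ι ≠ f)
    (φ : Finset (Finset α × Finset α))
    (hφ : ∀ c ∈ φ, c.1 ⊆ X ∧ c.2 ⊆ X ∧ Disjoint c.1 c.2)
    (F : (α → Bool) → Bool)
    (hImpl : ∀ s : α → Bool,
      F s = true ↔ ∃ c ∈ φ, (∀ x ∈ c.1, s x = true) ∧ ∀ x ∈ c.2, s x = false)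
    (s : α → Bool) :
    (resA (φ.image fun c => (c.1, insert ι c.2, ({f} : Finset α)))
        (X.filter fun x => s x = true) = {f} ↔ F s = true) ∧
    (resA (φ.image fun c => (c.1, insert ι c.2, ({f} : Finset α)))
        (X.filter fun x => s x = true) = ∅ ↔ F s = false) := by
  set W := X.filter fun x => s x = true with hW
  set A := φ.image fun c => (c.1, insert ι c.2, ({f} : Finset α)) with hA
  have hmemW : ∀ x, x ∈ W ↔ x ∈ X ∧ s x = true := by
    intro x; simp [hW]
  have hkey : ∀ y, y ∈ resA A W ↔ (y = f ∧ F s = true) := by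
    intro y
    simp only [resA, Finset.mem_biUnion, hA, Finset.mem_image]
    constructor
    · rintro ⟨r, ⟨c, hc, rfl⟩, hy⟩
      simp only [resr] at hy
      split_ifs at hy with he
      · simp only [Finset.mem_singleton] at hy
        refine ⟨hy, (hImpl s).2 ⟨c, hc, ?_, ?_⟩⟩
        · intro x hx
          exact ((hmemW x).1 (he.1 hx)).2
        · intro x hx
          have hxX : x ∈ X := (hφ c hc).2.1 hx
          have : x ∉ W := Finset.disjoint_left.1 he.2 (Finset.mem_insert_of_mem hx)
          by_contra hsx
          exact this ((hmemW x).2 ⟨hxX, by simpa using hsx⟩)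
      · simp at hy
    · rintro ⟨hy, hF⟩
      obtain ⟨c, hc, h1, h2⟩ := (hImpl s).1 hF
      refine ⟨_, ⟨c, hc, rfl⟩, ?_⟩
      have he : enab (c.1, insert ι c.2, ({f} : Finset α)) W := by
        constructor
        · intro x hx
          exact (hmemW x).2 ⟨(hφ c hc).1 hx, h1 x hx⟩
        · simp only [Finset.disjoint_left]
          intro x hx hxW
          rcases Finset.mem_insert.1 hx with rfl | hx2
          · exact hι ((hmemW x).1 hxW).1
          · have := h2 x hx2
            rw [((hmemW x).1 hxW).2] at this
            exact Bool.noConfusion this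
      simp [resr, he, hy]
  constructor
  · constructor
    · intro h
      have : f ∈ resA A W := by rw [h]; exact Finset.mem_singleton_self f
      exact ((hkey f).1 this).2
    · intro hF
      ext y
      simp [hkey y, hF, Finset.mem_singleton]
  · constructor
    · intro h
      by_contra hF
      have hF' : F s = true := by
        cases hFv : F s
        · exact absurd hFv hF
        · rfl
      have : f ∈ resA A W := (hkey f).2 ⟨rfl, hF'⟩
      rw [h] at this
      exact absurd this (Finset.notMem_empty f)
    · intro hF
      ext y
      simp only [Finset.notMem_empty, iff_false, hkey y]
      rintro ⟨-, hF'⟩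
      rw [hF] at hF'
      exact Bool.noConfusion hF'
end

section
/- Let BN = (f₁, ..., f_n) be a Boolean network over variables X = {x₁, ..., x_n} with each f_i given by a DNF formula φ_i, and let A_BN = {(pos(C), neg(C) ∪ {ι_{x_i}}, {x_i}) | C ∈ φ_i, 1 ≤ i ≤ n}. Then for any state s : X → 𝔹 with W_s = {x | s(x) = 1}, the result res_{A_BN}(W_s) equals {x_i | f_i(s) = 1}, i.e., the reaction system simulates one synchronous update step of BN. -/
variable {α : Type} [DecidableEq α]

/-- the reaction system
`A_BN = {(pos(C), neg(C) ∪ {ι_{x_i}}, {x_i}) | C ∈ φ_i, 1 ≤ i ≤ n}` simulates one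
synchronous update step of the Boolean network `BN = (f₁, …, f_n)`:
`res_{A_BN}(W_s) = {x_i | f_i(s) = 1}`. -/
theorem stmt7 (n : ℕ) (x ι : Fin n → α)
    (hx : Function.Injective x) (hι : Function.Injective ι)
    (hdisj : ∀ i j, ι i ≠ x j)
    (φ : Fin n → Finset (Finset α × Finset α))
    (hφ : ∀ i, ∀ c ∈ φ i, c.1 ⊆ Finset.univ.image x ∧ c.2 ⊆ Finset.univ.image x ∧
      Disjoint c.1 c.2)
    (f : Fin n → (Fin n → Bool) → Bool)
    (hImpl : ∀ i (s : Fin n → Bool),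
      f i s = true ↔ ∃ c ∈ φ i,
        c.1 ⊆ (Finset.univ.filter fun j => s j = true).image x ∧
        Disjoint c.2 ((Finset.univ.filter fun j => s j = true).image x))
    (s : Fin n → Bool) :
    resA ((Finset.univ : Finset (Fin n)).biUnion fun i =>
        (φ i).image fun c => (c.1, insert (ι i) c.2, ({x i} : Finset α)))
      ((Finset.univ.filter fun j => s j = true).image x)
      = (Finset.univ.filter fun i => f i s = true).image x := by
  ext a
  simp only [resA, resr, Finset.mem_biUnion, Finset.mem_image, Finset.mem_filter,
    Finset.mem_univ, true_and]
  constructor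
  · rintro ⟨r, ⟨i, c, hc, rfl⟩, ha⟩
    split_ifs at ha with h
    · simp only [Finset.mem_singleton] at ha
      subst ha
      refine ⟨i, ?_, rfl⟩
      rw [hImpl]
      refine ⟨c, hc, h.1, ?_⟩
      have := h.2
      rw [Finset.disjoint_insert_left] at this
      exact this.2
    · simp at ha
  · rintro ⟨i, hi, rfl⟩
    rw [hImpl] at hi
    obtain ⟨c, hc, h1, h2⟩ := hi
    refine ⟨(c.1, insert (ι i) c.2, {x i}), ⟨i, c, hc, rfl⟩, ?_⟩
    rw [if_pos]
    · exact Finset.mem_singleton_self _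
    · refine ⟨h1, ?_⟩
      rw [Finset.disjoint_insert_left]
      refine ⟨?_, h2⟩
      simp only [Finset.mem_image, Finset.mem_filter, Finset.mem_univ, true_and]
      rintro ⟨j, -, hj⟩
      exact hdisj i j hj.symm
end

section
/- Let A = (S, A) be a reaction system, S' ⊋ S, and A' = (S', A') any reaction system with A ⊆ A' ⊆ nonce_{S→S'}(A). Then for every Z ⊆ S', res_{A'}(Z) = res_A(Z ∩ S). -/
variable {α : Type} [DecidableEq α]

/-- The nonce-extension of `A` from `S` to `S'`:
`{(R ∪ R', I ∪ I', P) | (R,I,P) ∈ A, R', I' ⊆ S' \ S, (R ∪ R') ∩ (I ∪ I') = ∅}`. -/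
def nonce (A : Finset (Rxn α)) (S S' : Finset α) : Set (Rxn α) :=
  {r | ∃ a ∈ A, ∃ R' I' : Finset α, R' ⊆ S' \ S ∧ I' ⊆ S' \ S ∧
    Disjoint (a.1 ∪ R') (a.2.1 ∪ I') ∧ r = (a.1 ∪ R', a.2.1 ∪ I', a.2.2)}

/-- for any reaction system `A' = (S', A')` with
`A ⊆ A' ⊆ nonce_{S→S'}(A)`, for every `Z ⊆ S'` one has `res_{A'}(Z) = res_A(Z ∩ S)`. -/
theorem stmt15 (S S' : Finset α) (hSS' : S ⊂ S') (A A' : Finset (Rxn α))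
    (hA : ∀ r ∈ A, r.1 ⊆ S ∧ r.2.1 ⊆ S ∧ r.2.2 ⊆ S ∧ Disjoint r.1 r.2.1)
    (hAA' : A ⊆ A') (hA'n : ↑A' ⊆ nonce A S S')
    (Z : Finset α) (hZ : Z ⊆ S') :
    resA A' Z = resA A (Z ∩ S) := by
  ext x
  simp only [resA, Finset.mem_biUnion, resr]
  constructor
  · rintro ⟨r, hrA', hx⟩
    obtain ⟨a, haA, R', I', hR', hI', hdisj, rfl⟩ := hA'n hrA'
    by_cases h : enab (a.1 ∪ R', a.2.1 ∪ I', a.2.2) Z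
    · rw [if_pos h] at hx
      obtain ⟨hRs, hIs, -, -⟩ := hA a haA
      obtain ⟨h1, h2⟩ := h
      refine ⟨a, haA, ?_⟩
      rw [if_pos ?_]
      · exact hx
      · refine ⟨Finset.subset_inter (Finset.union_subset_iff.mp h1).1 hRs, ?_⟩
        exact ((h2.mono_left Finset.subset_union_left).mono_right Finset.inter_subset_left)
    · rw [if_neg h] at hx; exact absurd hx (Finset.notMem_empty x)
  · rintro ⟨a, haA, hx⟩
    by_cases h : enab a (Z ∩ S)
    · rw [if_pos h] at hx
      obtain ⟨hRs, hIs, -, -⟩ := hA a haA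
      refine ⟨a, hAA' haA, ?_⟩
      rw [if_pos ?_]
      · exact hx
      · refine ⟨h.1.trans Finset.inter_subset_left, ?_⟩
        rw [Finset.disjoint_left]; intro y hy hyZ
        exact (Finset.disjoint_left.mp h.2) hy (Finset.mem_inter.mpr ⟨hyZ, hIs hy⟩)
    · rw [if_neg h] at hx; exact absurd hx (Finset.notMem_empty x)
end
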